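/- arXiv:2004.11240 — 3 statements merged into one kernel-verified Lean document; each statement's English description precedes it below -/
import Mathlib

section
/- The max-Tucker rank is not strongly proper: the tensor X ∈ T(3,2,2) whose mode-1 unfolding X_(1) is the 3×4 matrix [I₃, e] (the 3×3 identity matrix adjoined with the all-ones column vector e ∈ ℝ³) satisfies r_max(X) = 3 > 2 = submax{3,2,2}. -/
/-- A real tensor of arbitrary order and dimensions. -/
structure Tensor where
  order : ℕ
  dim : Fin order → ℕ
  entries : ((i : Fin order) → Fin (dim i)) → ℝ

namespace Tensor

/-- `X` is the zero tensor. -/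
def IsZero (X : Tensor) : Prop := ∀ idx, X.entries idx = 0

/-- `X` is a rank-one tensor: an outer product of nonzero vectors. -/
def IsRankOne (X : Tensor) : Prop :=
  ∃ x : (i : Fin X.order) → (Fin (X.dim i) → ℝ),
    (∀ i, x i ≠ 0) ∧ ∀ idx, X.entries idx = ∏ i, x i (idx i)

/-- The identity tensor `I_{m,n}`: entries are 1 on the diagonal, 0 off it. -/
def idTensor (m n : ℕ) : Tensor :=
  ⟨m, fun _ => n, fun idx => if ∀ i j, idx i = idx j then 1 else 0⟩

/-- Scalar multiple of a tensor. -/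
def smul (α : ℝ) (X : Tensor) : Tensor :=
  ⟨X.order, X.dim, fun idx => α * X.entries idx⟩

/-- The restriction of `X` to the index sets given by the maps `e i`. -/
def restrict (X : Tensor) (k : Fin X.order → ℕ)
    (e : (i : Fin X.order) → Fin (k i) → Fin (X.dim i)) : Tensor :=
  ⟨X.order, k, fun idx => X.entries fun i => e i (idx i)⟩

/-- `Y` is a subtensor of `X`: a restriction of `X` to nonempty index sets
(given by strictly monotone enumerations `e i`) in each mode. -/
def IsSubtensor (Y X : Tensor) : Prop :=
  ∃ (k : Fin X.order → ℕ) (e : (i : Fin X.order) → Fin (k i) → Fin (X.dim i)),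
    (∀ i, 0 < k i) ∧ (∀ i, StrictMono (e i)) ∧ Y = X.restrict k e

/-- The tensor obtained from `X` by permuting its modes by `σ`. -/
def permute (X : Tensor) (σ : Equiv.Perm (Fin X.order)) : Tensor :=
  ⟨X.order, fun i => X.dim (σ i), fun idx =>
    X.entries fun i => Fin.cast (congrArg X.dim (σ.apply_symm_apply i)) (idx (σ.symm i))⟩

/-- The mode-`j` unfolding of `X`, an `n_j × ∏_{i ≠ j} n_i` matrix. -/
def unfold (X : Tensor) (j : Fin X.order) :
    Matrix (Fin (X.dim j)) ((i : {i : Fin X.order // i ≠ j}) → Fin (X.dim i.1)) ℝ :=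
  fun a b => X.entries fun i =>
    if h : i = j then Fin.cast (congrArg X.dim h.symm) a else b ⟨i, h⟩

/-- `r_j(X)`: the rank of the mode-`j` unfolding of `X`. -/
noncomputable def modeRank (X : Tensor) (j : Fin X.order) : ℕ := (X.unfold j).rank

/-- The second largest value (with multiplicity) of `f 1, …, f m` (0 if `m < 2`). -/
def submax {m : ℕ} (f : Fin m → ℕ) : ℕ :=
  Finset.univ.sup fun p : Fin m × Fin m => if p.1 ≠ p.2 then min (f p.1) (f p.2) else 0

/-- The max-Tucker rank: the largest of the mode unfolding ranks. -/
noncomputable def rmax (X : Tensor) : ℕ := Finset.univ.sup fun j => X.modeRank j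

/-- The submax-Tucker rank: the second largest of the mode unfolding ranks. -/
noncomputable def rsub (X : Tensor) : ℕ := submax fun j => X.modeRank j

/-- `r` is a tensor rank function: Properties (P1)–(P6). -/
structure IsRankFun (r : Tensor → ℕ) : Prop where
  /-- (P1a) `r X = 0` iff `X` is the zero tensor. -/
  zero_iff : ∀ X, r X = 0 ↔ X.IsZero
  /-- (P1b) `r X = 1` iff `X` is a rank-one tensor. -/
  one_iff : ∀ X, r X = 1 ↔ X.IsRankOne
  /-- (P2) `r (I_{m,n}) = n` for `m ≥ 2`, `n ≥ 1`. -/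
  id_rank : ∀ m n : ℕ, 2 ≤ m → 1 ≤ n → r (idTensor m n) = n
  /-- (P3) on tensors in `T(n₁, n₂, 1, …, 1)`, `r` is the rank of the
  corresponding `n₁ × n₂` matrix. -/
  matrix_rank : ∀ (X : Tensor) (h2 : 2 ≤ X.order),
    (∀ i : Fin X.order, 2 ≤ (i : ℕ) → X.dim i = 1) →
    r X = X.modeRank ⟨0, by omega⟩
  /-- (P4) invariance under multiplication by a nonzero scalar. -/
  smul_invariant : ∀ α : ℝ, α ≠ 0 → ∀ X, r (smul α X) = r X
  /-- (P5) invariance under permutation of the modes. -/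
  perm_invariant : ∀ (X : Tensor) (σ : Equiv.Perm (Fin X.order)), r (X.permute σ) = r X
  /-- (P6) monotonicity with respect to subtensors. -/
  subtensor_le : ∀ X Y : Tensor, IsSubtensor Y X → r Y ≤ r X

/-- `r` is proper: `r X ≤ n` on cubic tensors in `T(n, …, n)`. -/
def IsProper (r : Tensor → ℕ) : Prop :=
  ∀ (X : Tensor) (n : ℕ), 0 < X.order → 0 < n → (∀ i, X.dim i = n) → r X ≤ n

/-- `r` is strongly proper: `r X ≤ submax {n₁, …, n_m}` whenever `m ≥ 2`. -/
def IsStronglyProper (r : Tensor → ℕ) : Prop :=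
  ∀ X : Tensor, 2 ≤ X.order → r X ≤ submax X.dim

/-- `X` is of full `r` rank: it is zero, or `r X` equals one of its dimensions. -/
def IsFullRank (r : Tensor → ℕ) (X : Tensor) : Prop :=
  X.IsZero ∨ ∃ p : Fin X.order, r X = X.dim p

/-- `Y` is a maximum full rank subtensor of `X` under `r`. -/
def IsMaxFullRankSubtensor (r : Tensor → ℕ) (X Y : Tensor) : Prop :=
  IsSubtensor Y X ∧ IsFullRank r Y ∧
    ∀ Z : Tensor, IsSubtensor Z X → IsFullRank r Z → r Z ≤ r Y

/-- `r` has the max-full-rank-subtensor property. -/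
def HasMaxFullRankSubtensorProperty (r : Tensor → ℕ) : Prop :=
  ∀ X Y : Tensor, IsMaxFullRankSubtensor r X Y → r X = r Y

/-- The closure of a (proper) tensor rank function `r`. -/
noncomputable def closure (r : Tensor → ℕ) (X : Tensor) : ℕ :=
  sSup {k | ∃ Y : Tensor, IsSubtensor Y X ∧ IsFullRank r Y ∧ r Y = k}

/-- The smallest tensor rank function `r₊`. -/
noncomputable def rStar (X : Tensor) : ℕ :=
  sInf {k | ∃ r : Tensor → ℕ, IsRankFun r ∧ r X = k}

/-- The CP rank: the least number of rank-one tensors summing to `X`. -/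
noncomputable def rCP (X : Tensor) : ℕ :=
  sInf {r | ∃ a : Fin r → (i : Fin X.order) → (Fin (X.dim i) → ℝ),
    (∀ p i, a p i ≠ 0) ∧ ∀ idx, X.entries idx = ∑ p, ∏ i, a p i (idx i)}

end Tensor
open Tensor in
/-- The tensor `X ∈ T(3,2,2)` whose mode-1 unfolding is `[I₃, e]`:
columns of the unfolding are indexed by `(j,k)` via `c = 2j + k`;
columns `0,1,2` are the standard basis vectors of `ℝ³` and column `3` is
the all-ones vector. -/
noncomputable def X9 : Tensor :=
  ⟨3, ![3, 2, 2], fun idx =>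
    if 2 * (idx 1 : ℕ) + (idx 2 : ℕ) < 3 then
      (if (idx 0 : ℕ) = 2 * (idx 1 : ℕ) + (idx 2 : ℕ) then 1 else 0)
    else 1⟩

section Aux
open Tensor

-- X9.order = 3, X9.dim i reduces definitionally.

/-- The zero mode index of `X9`. -/
abbrev j0 : Fin X9.order := ⟨0, by norm_num [X9]⟩

/-- Column index type of the mode-0 unfolding of `X9`. -/
abbrev C9 := (i : {i : Fin X9.order // i ≠ j0}) → Fin (X9.dim i.1)

noncomputable def M9 : Matrix (Fin (X9.dim j0)) C9 ℝ := X9.unfold j0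

lemma dim9 (i : {i : Fin X9.order // i ≠ j0}) : X9.dim i.1 = 2 := by
  obtain ⟨i, hi⟩ := i
  fin_cases i
  · exact absurd rfl hi
  · rfl
  · rfl

def g9 (c : Fin 3) : C9 := fun i =>
  ⟨if (i.1 : ℕ) = 1 then (c : ℕ) / 2 else (c : ℕ) % 2, by
    rw [dim9]; have := c.isLt; split <;> omega⟩

noncomputable def P9 : Matrix C9 (Fin 3) ℝ := fun b c => if b = g9 c then 1 else 0

lemma MP9 : M9 * P9 = (1 : Matrix (Fin 3) (Fin 3) ℝ) := by
  ext a c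
  rw [Matrix.mul_apply]
  simp only [P9, mul_ite, mul_one, mul_zero, Finset.sum_ite_eq', Finset.mem_univ, if_true]
  show M9 a (g9 c) = _
  fin_cases a <;> fin_cases c <;>
    simp [M9, g9, X9, Tensor.unfold, Matrix.one_apply, Fin.ext_iff] <;> rfl

lemma rank_M9 : M9.rank = 3 := by
  refine le_antisymm (le_trans M9.rank_le_card_height (by rfl)) ?_
  have := Matrix.rank_mul_le_left M9 P9
  rw [MP9] at this
  exact le_trans (le_of_eq (Matrix.rank_one (R := ℝ) (n := Fin 3)).symm) this

end Aux


open Tensor in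
/-- the max-Tucker rank is not strongly proper, witnessed by the
tensor `X9 ∈ T(3,2,2)` with mode-1 unfolding `[I₃, e]`, which satisfies
`r_max X9 = 3 > 2 = submax {3,2,2}`. -/
theorem rmax_not_stronglyProper :
    rmax X9 = 3 ∧ submax X9.dim = 2 ∧ ¬ IsStronglyProper rmax := by
  have hdim : ∀ j : Fin X9.order, X9.dim j ≤ 3 := by decide
  have h1 : rmax X9 = 3 := by
    apply le_antisymm
    · apply Finset.sup_le
      intro j _
      exact le_trans ((X9.unfold j).rank_le_card_height) (by simpa using hdim j)
    · calc (3:ℕ) = X9.modeRank j0 := rank_M9.symm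
        _ ≤ _ := Finset.le_sup (Finset.mem_univ j0)
  refine ⟨h1, ?_, ?_⟩
  · show submax ![3,2,2] = 2
    decide
  · intro h
    have := h X9 (by norm_num [X9])
    rw [h1] at this
    have h2 : submax X9.dim = 2 := by show submax ![3,2,2] = 2; decide
    omega
end

section
/- Let n₁, n₂, n₃ ∈ ℕ and let Y, Z ∈ T(2n₁, 2n₂, 2n₃) be such that y_{ijk} = 0 unless i ≤ n₁, j ≤ n₂ and k ≤ n₃, and z_{ijk} = 0 unless i > n₁, j > n₂ and k > n₃. Suppose the mode unfolding ranks of Y are (r₁, r₂, r₃) with r₁ > r₂ > r₃ and those of Z are (R₁, R₂, R₃) with R₂ > R₁ > R₃. Then r_sub(Y + Z) > r₂ + R₁ = r_sub(Y) + r_sub(Z); in particular, the submax-Tucker rank is not subadditive. -/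
open Finset in
lemma rank_block {m n : Type*} [Fintype m] [Fintype n] (A B : Matrix m n ℝ)
    (P : m → Prop) (Q : n → Prop)
    (hA : ∀ i j, A i j ≠ 0 → P i ∧ Q j)
    (hB : ∀ i j, B i j ≠ 0 → ¬ P i ∧ ¬ Q j) :
    A.rank + B.rank ≤ (A + B).rank := by
  classical
  set U : Submodule ℝ (m → ℝ) :=
    { carrier := {v | ∀ i, ¬ P i → v i = 0}
      add_mem' := fun ha hb i hi => by simp [ha i hi, hb i hi]
      zero_mem' := fun i _ => rfl
      smul_mem' := fun c a ha i hi => by simp [ha i hi] } with hU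
  set V : Submodule ℝ (m → ℝ) :=
    { carrier := {v | ∀ i, P i → v i = 0}
      add_mem' := fun ha hb i hi => by simp [ha i hi, hb i hi]
      zero_mem' := fun i _ => rfl
      smul_mem' := fun c a ha i hi => by simp [ha i hi] } with hV
  have hRA_U : LinearMap.range A.mulVecLin ≤ U := by
    rintro _ ⟨v, rfl⟩ i hi
    simp only [Matrix.mulVecLin_apply, Matrix.mulVec, dotProduct]
    exact Finset.sum_eq_zero fun j _ => by
      rcases eq_or_ne (A i j) 0 with h | h
      · simp [h]
      · exact absurd (hA i j h).1 hi
  have hRB_V : LinearMap.range B.mulVecLin ≤ V := by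
    rintro _ ⟨v, rfl⟩ i hi
    simp only [Matrix.mulVecLin_apply, Matrix.mulVec, dotProduct]
    exact Finset.sum_eq_zero fun j _ => by
      rcases eq_or_ne (B i j) 0 with h | h
      · simp [h]
      · exact absurd hi (hB i j h).1
  have hRA : LinearMap.range A.mulVecLin ≤ LinearMap.range (A + B).mulVecLin := by
    rintro _ ⟨v, rfl⟩
    refine ⟨fun j => if Q j then v j else 0, ?_⟩
    simp only [Matrix.mulVecLin_apply, Matrix.add_mulVec]
    have h1 : B.mulVec (fun j => if Q j then v j else 0) = 0 := by
      funext i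
      simp only [Matrix.mulVec, dotProduct]
      refine Finset.sum_eq_zero fun j _ => ?_
      rcases eq_or_ne (B i j) 0 with h | h
      · simp [h]
      · rw [if_neg (hB i j h).2, mul_zero]
    have h2 : A.mulVec (fun j => if Q j then v j else 0) = A.mulVec v := by
      funext i
      simp only [Matrix.mulVec, dotProduct]
      refine Finset.sum_congr rfl fun j _ => ?_
      rcases eq_or_ne (A i j) 0 with h | h
      · simp [h]
      · rw [if_pos (hA i j h).2]
    rw [h1, h2, add_zero]
  have hRB : LinearMap.range B.mulVecLin ≤ LinearMap.range (A + B).mulVecLin := by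
    rintro _ ⟨v, rfl⟩
    refine ⟨fun j => if Q j then 0 else v j, ?_⟩
    simp only [Matrix.mulVecLin_apply, Matrix.add_mulVec]
    have h1 : A.mulVec (fun j => if Q j then 0 else v j) = 0 := by
      funext i
      simp only [Matrix.mulVec, dotProduct]
      refine Finset.sum_eq_zero fun j _ => ?_
      rcases eq_or_ne (A i j) 0 with h | h
      · simp [h]
      · rw [if_pos (hA i j h).2, mul_zero]
    have h2 : B.mulVec (fun j => if Q j then 0 else v j) = B.mulVec v := by
      funext i
      simp only [Matrix.mulVec, dotProduct]
      refine Finset.sum_congr rfl fun j _ => ?_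
      rcases eq_or_ne (B i j) 0 with h | h
      · simp [h]
      · rw [if_neg (hB i j h).2]
    rw [h1, h2, zero_add]
  have hdisj : LinearMap.range A.mulVecLin ⊓ LinearMap.range B.mulVecLin = ⊥ := by
    rw [eq_bot_iff]
    rintro v ⟨hvA, hvB⟩
    have h1 := hRA_U hvA
    have h2 := hRB_V hvB
    have : v = 0 := by
      funext i
      by_cases h : P i
      · exact h2 i h
      · exact h1 i h
    simp [this]
  have key := Submodule.finrank_sup_add_finrank_inf_eq
    (LinearMap.range A.mulVecLin) (LinearMap.range B.mulVecLin)
  rw [hdisj, finrank_bot, add_zero] at key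
  calc A.rank + B.rank
      = Module.finrank ℝ ↥(LinearMap.range A.mulVecLin ⊔ LinearMap.range B.mulVecLin) :=
        key.symm
    _ ≤ Module.finrank ℝ ↥(LinearMap.range (A + B).mulVecLin) :=
        Submodule.finrank_mono (sup_le hRA hRB)
    _ = (A + B).rank := rfl


lemma submax_le3 {f : Fin 3 → ℕ} {v : ℕ}
    (h : ∀ p q : Fin 3, p ≠ q → min (f p) (f q) ≤ v) : Tensor.submax f ≤ v := by
  apply Finset.sup_le
  rintro ⟨p, q⟩ -
  by_cases hpq : p ≠ q
  · rw [if_pos hpq]; exact h p q hpq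
  · rw [if_neg hpq]; exact Nat.zero_le v

lemma le_submax3 (f : Fin 3 → ℕ) (i j : Fin 3) (h : i ≠ j) :
    min (f i) (f j) ≤ Tensor.submax f := by
  have := Finset.le_sup
    (f := fun p : Fin 3 × Fin 3 => if p.1 ≠ p.2 then min (f p.1) (f p.2) else 0)
    (Finset.mem_univ (i, j))
  unfold Tensor.submax
  simpa [h] using this

lemma submax3_eq (a b c v : ℕ) (h1 : min a b ≤ v) (h2 : min a c ≤ v) (h3 : min b c ≤ v)
    (hv : min a b = v ∨ min a c = v ∨ min b c = v) : Tensor.submax ![a, b, c] = v := by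
  refine le_antisymm (submax_le3 ?_) ?_
  · intro p q hpq
    fin_cases p <;> fin_cases q <;> simp at hpq ⊢ <;> omega
  · rcases hv with hv | hv | hv
    · have := le_submax3 ![a, b, c] 0 1 (by decide)
      simp at this; omega
    · have := le_submax3 ![a, b, c] 0 2 (by decide)
      simp at this; omega
    · have := le_submax3 ![a, b, c] 1 2 (by decide)
      simp at this; omega

/-- The mode-`j` unfolding rank of a third order tensor, with shape data
given explicitly (so that mode indices can be written as numerals). -/
noncomputable def modeRank3 (d : Fin 3 → ℕ)
    (f : ((i : Fin 3) → Fin (d i)) → ℝ) (j : Fin 3) : ℕ :=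
  Tensor.modeRank ⟨3, d, f⟩ j

set_option maxHeartbeats 1000000 in
open Tensor in
/-- for `Y, Z ∈ T(2n₁, 2n₂, 2n₃)` supported on complementary
"corner" blocks, with mode unfolding ranks `(r₁, r₂, r₃)`, `r₁ > r₂ > r₃`, and
`(R₁, R₂, R₃)`, `R₂ > R₁ > R₃`, one has
`r_sub (Y + Z) > r₂ + R₁ = r_sub Y + r_sub Z`; in particular the submax-Tucker
rank is not subadditive. -/
theorem rsub_not_subadditive (n₁ n₂ n₃ : ℕ)
    (f g : ((i : Fin 3) → Fin ((![2 * n₁, 2 * n₂, 2 * n₃] : Fin 3 → ℕ) i)) → ℝ)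
    (hf : ∀ idx, ¬ ((idx 0 : ℕ) < n₁ ∧ (idx 1 : ℕ) < n₂ ∧ (idx 2 : ℕ) < n₃) →
      f idx = 0)
    (hg : ∀ idx, ¬ (n₁ ≤ (idx 0 : ℕ) ∧ n₂ ≤ (idx 1 : ℕ) ∧ n₃ ≤ (idx 2 : ℕ)) →
      g idx = 0)
    (r₁ r₂ r₃ R₁ R₂ R₃ : ℕ)
    (hY : modeRank3 _ f 0 = r₁ ∧ modeRank3 _ f 1 = r₂ ∧ modeRank3 _ f 2 = r₃)
    (hZ : modeRank3 _ g 0 = R₁ ∧ modeRank3 _ g 1 = R₂ ∧ modeRank3 _ g 2 = R₃)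
    (hr : r₃ < r₂ ∧ r₂ < r₁) (hR : R₃ < R₁ ∧ R₁ < R₂) :
    rsub ⟨3, ![2 * n₁, 2 * n₂, 2 * n₃], fun idx => f idx + g idx⟩ > r₂ + R₁ ∧
    r₂ + R₁ = rsub ⟨3, ![2 * n₁, 2 * n₂, 2 * n₃], f⟩ +
      rsub ⟨3, ![2 * n₁, 2 * n₂, 2 * n₃], g⟩ ∧
    ¬ (∀ (m : ℕ) (n : Fin m → ℕ) (F G : ((i : Fin m) → Fin (n i)) → ℝ),
        rsub ⟨m, n, fun idx => F idx + G idx⟩ ≤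
          rsub ⟨m, n, F⟩ + rsub ⟨m, n, G⟩) := by
  obtain ⟨hY1, hY2, hY3⟩ := hY
  obtain ⟨hZ1, hZ2, hZ3⟩ := hZ
  have key : ∀ j : Fin 3,
      (Tensor.unfold ⟨3, ![2 * n₁, 2 * n₂, 2 * n₃], f⟩ j).rank +
        (Tensor.unfold ⟨3, ![2 * n₁, 2 * n₂, 2 * n₃], g⟩ j).rank
        ≤ Tensor.modeRank ⟨3, ![2 * n₁, 2 * n₂, 2 * n₃], fun idx => f idx + g idx⟩ j := by
    intro j
    have hsum : Tensor.unfold ⟨3, ![2 * n₁, 2 * n₂, 2 * n₃], fun idx => f idx + g idx⟩ j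
        = Tensor.unfold ⟨3, ![2 * n₁, 2 * n₂, 2 * n₃], f⟩ j +
          Tensor.unfold ⟨3, ![2 * n₁, 2 * n₂, 2 * n₃], g⟩ j := rfl
    show _ ≤ (Tensor.unfold ⟨3, ![2 * n₁, 2 * n₂, 2 * n₃], fun idx => f idx + g idx⟩ j).rank
    rw [hsum]
    refine rank_block _ _ (fun a => (a : ℕ) < ![n₁, n₂, n₃] j)
      (fun b => ∀ (i : Fin 3) (h : i ≠ j),
        ((b ⟨i, h⟩ : Fin (![2 * n₁, 2 * n₂, 2 * n₃] i)) : ℕ) < ![n₁, n₂, n₃] i) ?_ ?_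
    · intro a b hab
      set idx : (i : Fin 3) → Fin (![2 * n₁, 2 * n₂, 2 * n₃] i) :=
        fun i => if h : i = j then
          Fin.cast (congrArg ![2 * n₁, 2 * n₂, 2 * n₃] h.symm) a else b ⟨i, h⟩ with hidx
      have hval : f idx ≠ 0 := hab
      have htriple : (idx 0 : ℕ) < n₁ ∧ (idx 1 : ℕ) < n₂ ∧ (idx 2 : ℕ) < n₃ := by
        by_contra hc; exact hval (hf idx hc)
      have hall : ∀ i : Fin 3, (idx i : ℕ) < ![n₁, n₂, n₃] i := by
        intro i; fin_cases i
        · simpa using htriple.1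
        · simpa using htriple.2.1
        · simpa using htriple.2.2
      have hj : (idx j : ℕ) = (a : ℕ) := by
        simp only [hidx, dif_pos rfl, Fin.coe_cast]
      constructor
      · have := hall j; rwa [hj] at this
      · intro i h
        have h2 : (idx i : ℕ) = ((b ⟨i, h⟩ : Fin (![2 * n₁, 2 * n₂, 2 * n₃] i)) : ℕ) := by
          simp only [hidx, dif_neg h]
        have := hall i; rwa [h2] at this
    · intro a b hab
      set idx : (i : Fin 3) → Fin (![2 * n₁, 2 * n₂, 2 * n₃] i) :=
        fun i => if h : i = j then
          Fin.cast (congrArg ![2 * n₁, 2 * n₂, 2 * n₃] h.symm) a else b ⟨i, h⟩ with hidx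
      have hval : g idx ≠ 0 := hab
      have htriple : n₁ ≤ (idx 0 : ℕ) ∧ n₂ ≤ (idx 1 : ℕ) ∧ n₃ ≤ (idx 2 : ℕ) := by
        by_contra hc; exact hval (hg idx hc)
      have hall : ∀ i : Fin 3, ![n₁, n₂, n₃] i ≤ (idx i : ℕ) := by
        intro i; fin_cases i
        · simpa using htriple.1
        · simpa using htriple.2.1
        · simpa using htriple.2.2
      have hj : (idx j : ℕ) = (a : ℕ) := by
        simp only [hidx, dif_pos rfl, Fin.coe_cast]
      constructor
      · have := hall j; rw [hj] at this; omega
      · intro hQ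
        obtain ⟨i, hij⟩ : ∃ i : Fin 3, i ≠ j := by
          fin_cases j
          exacts [⟨1, by decide⟩, ⟨0, by decide⟩, ⟨0, by decide⟩]
        have h1 := hQ i hij
        have h2 : (idx i : ℕ) = ((b ⟨i, hij⟩ : Fin (![2 * n₁, 2 * n₂, 2 * n₃] i)) : ℕ) := by
          simp only [hidx, dif_neg hij]
        have := hall i; rw [h2] at this; omega
  have eY0 : (Tensor.unfold ⟨3, ![2 * n₁, 2 * n₂, 2 * n₃], f⟩ 0).rank = r₁ := hY1
  have eY1 : (Tensor.unfold ⟨3, ![2 * n₁, 2 * n₂, 2 * n₃], f⟩ 1).rank = r₂ := hY2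
  have eZ0 : (Tensor.unfold ⟨3, ![2 * n₁, 2 * n₂, 2 * n₃], g⟩ 0).rank = R₁ := hZ1
  have eZ1 : (Tensor.unfold ⟨3, ![2 * n₁, 2 * n₂, 2 * n₃], g⟩ 1).rank = R₂ := hZ2
  have k0 := key 0
  have k1 := key 1
  rw [eY0, eZ0] at k0
  rw [eY1, eZ1] at k1
  have part1 : rsub ⟨3, ![2 * n₁, 2 * n₂, 2 * n₃], fun idx => f idx + g idx⟩ > r₂ + R₁ := by
    have hmin : min
        (Tensor.modeRank ⟨3, ![2 * n₁, 2 * n₂, 2 * n₃], fun idx => f idx + g idx⟩ 0)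
        (Tensor.modeRank ⟨3, ![2 * n₁, 2 * n₂, 2 * n₃], fun idx => f idx + g idx⟩ 1)
        ≤ Tensor.submax fun jj =>
          Tensor.modeRank ⟨3, ![2 * n₁, 2 * n₂, 2 * n₃], fun idx => f idx + g idx⟩ jj :=
      le_submax3 _ 0 1 (by decide)
    show r₂ + R₁ < Tensor.submax fun jj =>
      Tensor.modeRank ⟨3, ![2 * n₁, 2 * n₂, 2 * n₃], fun idx => f idx + g idx⟩ jj
    omega
  have hvY : (fun jj => Tensor.modeRank ⟨3, ![2 * n₁, 2 * n₂, 2 * n₃], f⟩ jj)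
      = ![r₁, r₂, r₃] := by
    funext jj; fin_cases jj
    · simpa [modeRank3] using hY1
    · simpa [modeRank3] using hY2
    · simpa [modeRank3] using hY3
  have hvZ : (fun jj => Tensor.modeRank ⟨3, ![2 * n₁, 2 * n₂, 2 * n₃], g⟩ jj)
      = ![R₁, R₂, R₃] := by
    funext jj; fin_cases jj
    · simpa [modeRank3] using hZ1
    · simpa [modeRank3] using hZ2
    · simpa [modeRank3] using hZ3
  have hrsubY : rsub ⟨3, ![2 * n₁, 2 * n₂, 2 * n₃], f⟩ = r₂ := by
    show Tensor.submax (fun jj => Tensor.modeRank ⟨3, ![2 * n₁, 2 * n₂, 2 * n₃], f⟩ jj) = r₂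
    rw [hvY]
    exact submax3_eq r₁ r₂ r₃ r₂ (by omega) (by omega) (by omega) (by omega)
  have hrsubZ : rsub ⟨3, ![2 * n₁, 2 * n₂, 2 * n₃], g⟩ = R₁ := by
    show Tensor.submax (fun jj => Tensor.modeRank ⟨3, ![2 * n₁, 2 * n₂, 2 * n₃], g⟩ jj) = R₁
    rw [hvZ]
    exact submax3_eq R₁ R₂ R₃ R₁ (by omega) (by omega) (by omega) (by omega)
  have part2 : r₂ + R₁ = rsub ⟨3, ![2 * n₁, 2 * n₂, 2 * n₃], f⟩ +
      rsub ⟨3, ![2 * n₁, 2 * n₂, 2 * n₃], g⟩ := by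
    rw [hrsubY, hrsubZ]
  refine ⟨part1, part2, ?_⟩
  intro H
  have := H 3 ![2 * n₁, 2 * n₂, 2 * n₃] f g
  omega
end

section
/- The max-Tucker rank function r_max has the max-full-rank-subtensor property: for every X ∈ T and every maximum full rank subtensor Y of X under r_max, r_max(X) = r_max(Y). -/
section Aux

open Tensor

/-- General submatrix rank bound: restricting/rearranging rows and columns by
arbitrary maps does not increase the rank. -/
lemma aux_rank_submatrix_le {l m n o : Type*} [Fintype l] [Fintype m] [Fintype n] [Fintype o]
    (A : Matrix m n ℝ) (f : l → m) (g : o → n) :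
    (A.submatrix f g).rank ≤ A.rank := by
  classical
  rw [Matrix.rank_eq_finrank_span_row, Matrix.rank_eq_finrank_span_row]
  have hsub : Set.range (A.submatrix f g) ⊆ (LinearMap.funLeft ℝ ℝ g) '' (Set.range A) := by
    rintro _ ⟨i, rfl⟩
    exact ⟨A (f i), ⟨f i, rfl⟩, rfl⟩
  calc Module.finrank ℝ (Submodule.span ℝ (Set.range (A.submatrix f g)))
      ≤ Module.finrank ℝ ((Submodule.span ℝ (Set.range A)).map (LinearMap.funLeft ℝ ℝ g)) := by
        apply Submodule.finrank_mono
        rw [← Submodule.span_image]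
        exact Submodule.span_mono hsub
    _ ≤ Module.finrank ℝ (Submodule.span ℝ (Set.range A)) :=
        Submodule.finrank_map_le _ _

/-- A real matrix has a set of `rank` rows whose row-submatrix still has full rank. -/
lemma aux_exists_row_submatrix {n : ℕ} {c : Type*} [Fintype c]
    (A : Matrix (Fin n) c ℝ) (K : ℕ) (hK : A.rank = K) :
    ∃ (S : Finset (Fin n)) (hS : S.card = K),
      (A.submatrix (S.orderEmbOfFin hS) id).rank = K := by
  classical
  subst hK
  obtain ⟨s, hsub, hspan, hind⟩ := exists_linearIndependent ℝ (Set.range A)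
  have hfin : s.Finite := (Set.finite_range A).subset hsub
  haveI : Fintype s := hfin.fintype
  have hcard : Module.finrank ℝ (Submodule.span ℝ s) = s.toFinset.card :=
    finrank_span_set_eq_card hind
  have hrankA : A.rank = s.toFinset.card := by
    rw [Matrix.rank_eq_finrank_span_row, Matrix.row, ← hspan, hcard]
  have hchoice : ∀ x : s, ∃ i : Fin n, A i = (x : c → ℝ) := fun x => hsub x.2
  choose φ hφ using hchoice
  have hinj : Function.Injective φ := by
    intro x y hxy
    apply Subtype.ext
    rw [← hφ x, ← hφ y, hxy]
  have hScard : (Finset.univ.image φ).card = A.rank := by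
    rw [Finset.card_image_of_injective _ hinj, Finset.card_univ, hrankA, Set.toFinset_card]
  refine ⟨Finset.univ.image φ, hScard, ?_⟩
  · set B := A.submatrix ((Finset.univ.image φ).orderEmbOfFin hScard) id with hB
    apply le_antisymm
    · calc B.rank ≤ Fintype.card (Fin A.rank) := B.rank_le_card_height
        _ = A.rank := Fintype.card_fin _
    · have hsrows : s ⊆ Set.range B := by
        intro x hx
        have h1 : φ ⟨x, hx⟩ ∈ Finset.univ.image φ :=
          Finset.mem_image_of_mem _ (Finset.mem_univ _)
        have h2 : φ ⟨x, hx⟩ ∈ Set.range ((Finset.univ.image φ).orderEmbOfFin hScard) := by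
          rw [Finset.range_orderEmbOfFin]; exact_mod_cast h1
        obtain ⟨a, ha⟩ := h2
        refine ⟨a, ?_⟩
        funext cc
        rw [hB]
        simp only [Matrix.submatrix_apply, id_eq, ha]
        exact congrFun (hφ ⟨x, hx⟩) cc
      have hle : Submodule.span ℝ (Set.range A) ≤ Submodule.span ℝ (Set.range B) := by
        rw [← hspan]; exact Submodule.span_mono hsrows
      calc A.rank = Module.finrank ℝ (Submodule.span ℝ (Set.range A)) :=
            Matrix.rank_eq_finrank_span_row A
        _ ≤ Module.finrank ℝ (Submodule.span ℝ (Set.range B)) := Submodule.finrank_mono hle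
        _ = B.rank := (Matrix.rank_eq_finrank_span_row B).symm

/-- The unfolding of a restriction is a submatrix of the unfolding. -/
lemma aux_unfold_restrict (X : Tensor) (k : Fin X.order → ℕ)
    (e : (i : Fin X.order) → Fin (k i) → Fin (X.dim i)) (j : Fin X.order) :
    (X.restrict k e).unfold j =
      (X.unfold j).submatrix (e j)
        (fun b (i : {i : Fin X.order // i ≠ j}) => e i.1 (b i)) := by
  ext a b
  show (X.restrict k e).entries _ = X.entries _
  simp only [Tensor.restrict]
  congr 1
  funext i
  by_cases h : i = j
  · subst h
    simp
    rfl
  · simp [h]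

/-- Monotonicity of `rmax` under restriction. -/
lemma aux_rmax_restrict_le (X : Tensor) (k : Fin X.order → ℕ)
    (e : (i : Fin X.order) → Fin (k i) → Fin (X.dim i)) :
    rmax (X.restrict k e) ≤ rmax X := by
  classical
  apply Finset.sup_le
  intro j _
  have h1 : (X.restrict k e).modeRank j ≤ X.modeRank j := by
    have := aux_rank_submatrix_le (X.unfold j) (e j)
      (fun (b : (i : {i : Fin X.order // i ≠ j}) → Fin (k i.1)) i => e i.1 (b i))
    rw [Matrix.rank_eq_finrank_span_row, Matrix.rank_eq_finrank_span_row] at this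
    unfold Tensor.modeRank
    rw [Matrix.rank_eq_finrank_span_row, aux_unfold_restrict X k e j]
    exact this.trans_eq (by convert (Matrix.rank_eq_finrank_span_row (X.unfold j)).symm using 2; rfl)
  exact h1.trans (Finset.le_sup (f := fun i => X.modeRank i) (Finset.mem_univ j))

/-- The dimension vector of the mode-`j` row-selected subtensor. -/
def modeDims (X : Tensor) (j : Fin X.order) (K : ℕ) : Fin X.order → ℕ :=
  fun i => if i = j then K else X.dim i

/-- The enumeration maps of the mode-`j` row-selected subtensor. -/
def modeEmb (X : Tensor) (j : Fin X.order) (K : ℕ) (S : Finset (Fin (X.dim j)))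
    (hS : S.card = K) : (i : Fin X.order) → Fin (modeDims X j K i) → Fin (X.dim i) :=
  fun i =>
    if h : i = j then
      fun a => Fin.cast (congrArg X.dim h.symm)
        (S.orderEmbOfFin hS ⟨a.1, by simpa [modeDims, h] using a.2⟩)
    else
      fun a => ⟨a.1, by simpa [modeDims, h] using a.2⟩

lemma modeEmb_strictMono (X : Tensor) (j : Fin X.order) (K : ℕ)
    (S : Finset (Fin (X.dim j))) (hS : S.card = K) (i : Fin X.order) :
    StrictMono (modeEmb X j K S hS i) := by
  intro a b hab
  by_cases h : i = j
  · subst h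
    simp only [modeEmb, dif_pos rfl]
    exact (S.orderEmbOfFin hS).strictMono hab
  · simp only [modeEmb, dif_neg h]
    exact hab

/-- Key matrix identity: the chosen row submatrix of the unfolding of `X`
is a submatrix of the unfolding of the restricted tensor. -/
lemma aux_key (X : Tensor) (j : Fin X.order) (K : ℕ)
    (S : Finset (Fin (X.dim j))) (hS : S.card = K) :
    (X.unfold j).submatrix (S.orderEmbOfFin hS) id =
      ((X.restrict (modeDims X j K) (modeEmb X j K S hS)).unfold j).submatrix
        (fun a : Fin K => (⟨a.1, by simp [modeDims]⟩ : Fin (modeDims X j K j)))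
        (fun c (i : {i : Fin X.order // i ≠ j}) =>
          (⟨(c i).1, by simpa [modeDims, i.2] using (c i).2⟩ : Fin (modeDims X j K i.1))) := by
  ext a c
  show X.entries _ = (X.restrict (modeDims X j K) (modeEmb X j K S hS)).entries _
  simp only [Tensor.restrict]
  congr 1
  funext i
  by_cases h : i = j
  · subst h
    simp [modeEmb]
  · simp [modeEmb, h]

/-- Existence of a full-rank subtensor realizing `rmax`. -/
lemma aux_exists_good_subtensor (X : Tensor) (hpos : 0 < rmax X) :
    ∃ Z : Tensor, IsSubtensor Z X ∧ IsFullRank rmax Z ∧ rmax Z = rmax X := by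
  classical
  have huniv : (Finset.univ : Finset (Fin X.order)).Nonempty := by
    by_contra h
    rw [Finset.not_nonempty_iff_eq_empty] at h
    rw [rmax, h, Finset.sup_empty] at hpos
    simp at hpos
  obtain ⟨j, -, hj⟩ := Finset.exists_mem_eq_sup Finset.univ huniv (fun i => X.modeRank i)
  set K := rmax X with hK
  have hA : (X.unfold j).rank = K := by
    rw [hK]; exact hj.symm
  have hKpos : 0 < K := hpos
  -- all dimensions are positive
  have hdim : ∀ i : Fin X.order, 0 < X.dim i := by
    intro i
    by_contra h
    push_neg at h
    have h0 : X.dim i = 0 := Nat.le_zero.mp h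
    have hzero : (X.unfold j).rank = 0 := by
      rcases eq_or_ne i j with rfl | hij
      · have := (X.unfold i).rank_le_card_height
        simp [h0] at this
        exact this
      · have hFe : IsEmpty (Fin (X.dim i)) := by
          rw [h0]; infer_instance
        haveI : IsEmpty ((t : {t : Fin X.order // t ≠ j}) → Fin (X.dim t.1)) :=
          ⟨fun b => hFe.false (b ⟨i, hij⟩)⟩
        have := (X.unfold j).rank_le_card_width
        simpa using this
    omega
  obtain ⟨S, hS, hSr⟩ := aux_exists_row_submatrix (X.unfold j) K hA
  set Z := X.restrict (modeDims X j K) (modeEmb X j K S hS) with hZ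
  have hZsub : IsSubtensor Z X := by
    refine ⟨modeDims X j K, modeEmb X j K S hS, ?_, ?_, rfl⟩
    · intro i
      by_cases h : i = j
      · simpa [modeDims, h] using hKpos
      · simpa [modeDims, h] using hdim i
    · exact modeEmb_strictMono X j K S hS
  have hZle : rmax Z ≤ K := aux_rmax_restrict_le X _ _
  have hZge : K ≤ rmax Z := by
    have h1 : K = ((X.unfold j).submatrix (S.orderEmbOfFin hS) id).rank := hSr.symm
    rw [aux_key X j K S hS] at h1
    have h3 : (Z.unfold j).rank ≤ rmax Z := by
      have : Z.modeRank j ≤ rmax Z := Finset.le_sup (f := fun i => Z.modeRank i) (Finset.mem_univ j)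
      unfold Tensor.modeRank at this
      convert this using 2
    calc K = _ := h1
      _ ≤ (Z.unfold j).rank := aux_rank_submatrix_le _ _ _
      _ ≤ rmax Z := h3
  have hZr : rmax Z = K := le_antisymm hZle hZge
  refine ⟨Z, hZsub, Or.inr ⟨j, ?_⟩, hZr⟩
  rw [hZr]
  show K = modeDims X j K j
  simp [modeDims]

end Aux

open Tensor in
/-- the max-Tucker rank has the max-full-rank-subtensor
property. -/
theorem rmax_hasMaxFullRankSubtensorProperty :
    HasMaxFullRankSubtensorProperty rmax := by
  classical
  rintro X Y ⟨hYsub, hYfull, hmax⟩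
  have hYle : rmax Y ≤ rmax X := by
    obtain ⟨k, e, -, -, rfl⟩ := hYsub
    exact aux_rmax_restrict_le X k e
  refine le_antisymm ?_ hYle
  rcases Nat.eq_zero_or_pos (rmax X) with h0 | hpos
  · omega
  obtain ⟨Z, hZsub, hZfull, hZr⟩ := aux_exists_good_subtensor X hpos
  calc rmax X = rmax Z := hZr.symm
    _ ≤ rmax Y := hmax Z hZsub hZfull
end
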